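/- Let r ≥ 3, n = p_1^{n_1}⋯p_r^{n_r} with primes p_1 < ... < p_r, and define β_a^s as β_a^s = φ(n) + (n/(p_1⋯p_r))·(1/p_a^{s-1})·[ (p_1⋯p_r)/p_a + φ((p_1⋯p_r)/p_a)·(p_a^{s-1} − 2) ]. If a < b in [r] and p_a^s < p_b for some s ∈ [n_a], then β_a^s > β_b^1. -/

import Mathlib

noncomputable def beta (r : ℕ) (p e : ℕ → ℕ) (a s : ℕ) : ℚ :=
  (Nat.totient (∏ i ∈ Finset.range r, p i ^ e i) : ℚ) +
    ((∏ i ∈ Finset.range r, p i ^ e i : ℕ) : ℚ) /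
        ((∏ i ∈ Finset.range r, p i : ℕ) : ℚ) *
      (1 / (p a : ℚ) ^ (s - 1)) *
      (((∏ i ∈ Finset.range r, p i : ℕ) : ℚ) / (p a : ℚ) +
        (Nat.totient ((∏ i ∈ Finset.range r, p i) / p a) : ℚ) *
          ((p a : ℚ) ^ (s - 1) - 2))

/-- Totient of a product of distinct primes. -/
lemma totient_prod_primes (S : Finset ℕ) (p : ℕ → ℕ) (hp : ∀ i ∈ S, (p i).Prime)
    (hinj : ∀ i ∈ S, ∀ j ∈ S, p i = p j → i = j) :
    Nat.totient (∏ i ∈ S, p i) = ∏ i ∈ S, (p i - 1) := by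
  induction S using Finset.induction_on with
  | empty => simp
  | @insert c S hc ih =>
    have hpc : (p c).Prime := hp c (Finset.mem_insert_self _ _)
    have hcop : Nat.Coprime (p c) (∏ i ∈ S, p i) := by
      apply Nat.Coprime.prod_right
      intro i hi
      have hpi : (p i).Prime := hp i (Finset.mem_insert_of_mem hi)
      refine (Nat.coprime_primes hpc hpi).mpr ?_
      intro heq
      exact hc (by
        have := hinj c (Finset.mem_insert_self _ _) i (Finset.mem_insert_of_mem hi) heq
        rwa [this])
    rw [Finset.prod_insert hc, Finset.prod_insert hc, Nat.totient_mul hcop,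
      Nat.totient_prime hpc,
      ih (fun i hi => hp i (Finset.mem_insert_of_mem hi))
        (fun i hi j hj => hinj i (Finset.mem_insert_of_mem hi) j (Finset.mem_insert_of_mem hj))]

theorem stmt_11 (r : ℕ) (hr : 3 ≤ r) (p e : ℕ → ℕ)
    (hp : ∀ i < r, (p i).Prime)
    (hmono : ∀ i j, i < j → j < r → p i < p j)
    (he : ∀ i < r, 1 ≤ e i)
    (a b : ℕ) (hab : a < b) (hb : b < r)
    (s : ℕ) (hs1 : 1 ≤ s) (hs : s ≤ e a) (hps : p a ^ s < p b) :
    beta r p e a s > beta r p e b 1 := by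
  have ha' : a < r := lt_trans hab hb
  have hane : a ≠ b := Nat.ne_of_lt hab
  have ha : a ∈ Finset.range r := Finset.mem_range.mpr ha'
  have hbmem : b ∈ Finset.range r := Finset.mem_range.mpr hb
  have hpa := hp a ha'
  have hpb := hp b hb
  have hinj : ∀ i ∈ Finset.range r, ∀ j ∈ Finset.range r, p i = p j → i = j := by
    intro i hi j hj hpe
    by_contra hne
    rcases Nat.lt_or_ge i j with h | h
    · exact absurd hpe (Nat.ne_of_lt (hmono i j h (Finset.mem_range.mp hj)))
    · have := hmono j i (lt_of_le_of_ne h (Ne.symm hne)) (Finset.mem_range.mp hi)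
      omega
  set T := ((Finset.range r).erase a).erase b with hT
  set M := ∏ i ∈ T, p i with hMdef
  have hbmem' : b ∈ (Finset.range r).erase a := Finset.mem_erase.mpr ⟨hane.symm, hbmem⟩
  have hamem' : a ∈ (Finset.range r).erase b := Finset.mem_erase.mpr ⟨hane, ha⟩
  have hP : ∏ i ∈ Finset.range r, p i = p a * (p b * M) := by
    rw [← Finset.mul_prod_erase _ p ha, ← Finset.mul_prod_erase _ p hbmem']
  have hPb : ∏ i ∈ Finset.range r, p i = p b * (p a * M) := by
    rw [← Finset.mul_prod_erase _ p hbmem, ← Finset.mul_prod_erase _ p hamem',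
      Finset.erase_right_comm, ← hT, ← hMdef]
  have hdivA : (∏ i ∈ Finset.range r, p i) / p a = p b * M := by
    rw [hP, Nat.mul_div_cancel_left _ hpa.pos]
  have hdivB : (∏ i ∈ Finset.range r, p i) / p b = p a * M := by
    rw [hPb, Nat.mul_div_cancel_left _ hpb.pos]
  -- totients
  have hTsub : T ⊆ Finset.range r := by
    intro i hi
    exact Finset.mem_of_mem_erase (Finset.mem_of_mem_erase hi)
  have totM : Nat.totient M = ∏ i ∈ T, (p i - 1) :=
    totient_prod_primes T p (fun i hi => hp i (Finset.mem_range.mp (hTsub hi)))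
      (fun i hi j hj => hinj i (hTsub hi) j (hTsub hj))
  have hcopM : ∀ c, c < r → c ∉ T → Nat.Coprime (p c) M := by
    intro c hc hcT
    apply Nat.Coprime.prod_right
    intro i hi
    refine (Nat.coprime_primes (hp c hc) (hp i (Finset.mem_range.mp (hTsub hi)))).mpr ?_
    intro heq
    exact hcT (by rwa [hinj c (Finset.mem_range.mpr hc) i (hTsub hi) heq])
  have hbT : b ∉ T := fun h => (Finset.mem_erase.mp h).1 rfl
  have haT : a ∉ T := fun h => (Finset.mem_erase.mp (Finset.mem_of_mem_erase h)).1 rfl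
  have totA : Nat.totient (p b * M) = (p b - 1) * Nat.totient M := by
    rw [Nat.totient_mul (hcopM b hb hbT), Nat.totient_prime hpb]
  have totB : Nat.totient (p a * M) = (p a - 1) * Nat.totient M := by
    rw [Nat.totient_mul (hcopM a ha' haT), Nat.totient_prime hpa]
  -- size facts for M
  have hTne : T.Nonempty := by
    rw [← Finset.card_pos, hT, Finset.card_erase_of_mem hbmem',
      Finset.card_erase_of_mem ha, Finset.card_range]
    omega
  obtain ⟨c, hcT⟩ := hTne
  have hM2 : 2 ≤ M := by
    calc 2 ≤ p c := (hp c (Finset.mem_range.mp (hTsub hcT))).two_le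
    _ ≤ M := Finset.single_le_prod' (fun i hi => Nat.one_le_iff_ne_zero.mpr
        (hp i (Finset.mem_range.mp (hTsub hi))).pos.ne') hcT
  have hfm1 : 1 ≤ Nat.totient M := Nat.totient_pos.mpr (by omega)
  have hfmlt : Nat.totient M < M := Nat.totient_lt M (by omega)
  -- rational facts
  have hpaQ : (2:ℚ) ≤ (p a : ℚ) := by exact_mod_cast hpa.two_le
  have hpbQ : (2:ℚ) ≤ (p b : ℚ) := by exact_mod_cast hpb.two_le
  have hmQ : ((Nat.totient M : ℚ)) + 1 ≤ (M : ℚ) := by exact_mod_cast hfmlt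
  have hfmQ : (1:ℚ) ≤ (Nat.totient M : ℚ) := by exact_mod_cast hfm1
  have hq : (0:ℚ) < (p a : ℚ) ^ (s - 1) := pow_pos (by linarith) _
  have hq1 : (1:ℚ) ≤ (p a : ℚ) ^ (s - 1) := one_le_pow₀ (by linarith)
  have hps' : (p a : ℚ) * (p a : ℚ) ^ (s - 1) + 1 ≤ (p b : ℚ) := by
    have h1 : (p a : ℚ) ^ s + 1 ≤ (p b : ℚ) := by exact_mod_cast hps
    have h2 : (p a : ℚ) ^ s = (p a : ℚ) * (p a : ℚ) ^ (s - 1) := by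
      rw [← pow_succ']
      congr 1
      omega
    linarith
  have hNpos : 0 < ((∏ i ∈ Finset.range r, p i ^ e i : ℕ) : ℚ) := by
    have : 0 < ∏ i ∈ Finset.range r, p i ^ e i :=
      Finset.prod_pos fun i hi => pow_pos (hp i (Finset.mem_range.mp hi)).pos _
    exact_mod_cast this
  have hcast : ((∏ i ∈ Finset.range r, p i : ℕ) : ℚ) = (p a : ℚ) * ((p b : ℚ) * (M : ℚ)) := by
    rw [hP]; push_cast; ring
  have hMQpos : (0:ℚ) < (M : ℚ) := by exact_mod_cast (by omega : 0 < M)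
  -- unfold and rewrite
  rw [gt_iff_lt]
  unfold beta
  rw [hdivA, hdivB, totA, totB, hcast]
  apply add_lt_add_right
  rw [← sub_pos]
  set A := ((∏ i ∈ Finset.range r, p i ^ e i : ℕ) : ℚ) with hA
  set pa := (p a : ℚ)
  set pb := (p b : ℚ)
  set m := (M : ℚ)
  set fm := ((Nat.totient M : ℕ) : ℚ)
  set q := pa ^ (s - 1) with hqdef
  have hcastA : (((p b - 1) * Nat.totient M : ℕ) : ℚ) = (pb - 1) * fm := by
    push_cast [Nat.cast_sub hpb.one_lt.le]; ring
  have hcastB : (((p a - 1) * Nat.totient M : ℕ) : ℚ) = (pa - 1) * fm := by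
    push_cast [Nat.cast_sub hpa.one_lt.le]; ring
  rw [hcastA, hcastB]
  have hpane : pa ≠ 0 := by positivity
  have hpbne : pb ≠ 0 := by positivity
  have hmne : m ≠ 0 := ne_of_gt hMQpos
  have hqne : q ≠ 0 := ne_of_gt hq
  have e1 : pa * (pb * m) / pa = pb * m := mul_div_cancel_left₀ (pb * m) hpane
  have e2 : pa * (pb * m) / pb = pa * m := by
    rw [div_eq_iff hpbne]; ring
  simp only [Nat.sub_self, pow_zero, one_div_one]
  rw [e1, e2]
  set c := A / (pa * (pb * m)) with hc
  have hcpos : 0 < c := by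
    rw [hc]
    apply div_pos hNpos
    apply mul_pos (by linarith) (mul_pos (by linarith) hMQpos)
  have hid : c * (1 / q) * (pb * m + (pb - 1) * fm * (q - 2)) -
      c * 1 * (pa * m + (pa - 1) * fm * (1 - 2)) =
      c * (1 / q) * ((pb - pa * q) * (m - fm) + fm * (q - 1) * (pb - 2)) := by
    field_simp
    ring
  rw [hid]
  apply mul_pos (mul_pos hcpos (one_div_pos.mpr hq))
  have h1 : (0:ℚ) < (pb - pa * q) * (m - fm) := by
    apply mul_pos <;> linarith
  have h2 : (0:ℚ) ≤ fm * (q - 1) * (pb - 2) := by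
    apply mul_nonneg
    · apply mul_nonneg <;> linarith
    · linarith
  linarith
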